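/- arXiv:1504.00274 — 2 statements merged into one kernel-verified Lean document; each statement's English description precedes it below -/
import Mathlib

section
/- Let f be a monic real polynomial of degree n all of whose complex roots are real, which satisfies the Casas-Alvero conditions (for each j ∈ {1, ..., n-1} there exists z_j with f(z_j) = 0 and f^{(j)}(z_j) = 0) and is not of the form (X - b)^n. Let r be the maximum of the multiplicities of the roots of f, and let m, s be integers with r - 1 ≤ m, 2 ≤ s ≤ n - r and m + s ≤ n - 1. Denote C_m = { x ∈ ℝ : f(x) = 0 and f^{(m)}(x) = 0 } and C_{m+s} = { x ∈ ℝ : f(x) = 0 and f^{(m+s)}(x) = 0 }. Then the sum of the squares of the roots of f^{(m)} (counted with multiplicity) that do not belong to C_m ∩ C_{m+s} is greater than or equal to the sum of the squares of the roots of f^{(m+s)} (counted with multiplicity) that do not belong to C_m ∩ C_{m+s}. -/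
open Polynomial Multiset

lemma my_esymm_one (s : Multiset ℝ) : s.esymm 1 = s.sum := by
  rw [Multiset.esymm, powersetCard_one, Multiset.map_map]
  simp

lemma my_sum_map_mul (a : ℝ) (s : Multiset ℝ) :
    (Multiset.map (fun x => a * x) s).sum = a * s.sum := by
  induction s using Multiset.induction_on with
  | empty => simp
  | cons b s ih => simp [ih, mul_add]

lemma my_esymm_two_cons (a : ℝ) (s : Multiset ℝ) :
    (a ::ₘ s).esymm 2 = s.esymm 2 + a * s.sum := by
  rw [Multiset.esymm, powersetCard_cons, Multiset.map_add, Multiset.sum_add, Multiset.map_map]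
  congr 1
  rw [← my_esymm_one s, Multiset.esymm, powersetCard_one, Multiset.map_map, Multiset.map_map]
  simp only [Function.comp_def, Multiset.prod_cons, Multiset.prod_singleton]
  rw [Multiset.map_id']; exact my_sum_map_mul a s

lemma my_sq_sum (s : Multiset ℝ) :
    (s.map (fun x => x ^ 2)).sum = s.sum ^ 2 - 2 * s.esymm 2 := by
  induction s using Multiset.induction_on with
  | empty => simp [Multiset.esymm, powersetCard_zero_right]
  | cons a s ih =>
    rw [Multiset.map_cons, Multiset.sum_cons, Multiset.sum_cons, my_esymm_two_cons, ih]
    ring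

lemma my_cs (s : Multiset ℝ) :
    s.sum ^ 2 ≤ (Multiset.card s : ℝ) * (s.map (fun x => x ^ 2)).sum := by
  induction s using Multiset.induction_on with
  | empty => simp
  | cons a s ih =>
    rcases eq_or_ne s 0 with rfl | hs
    · simp
    have hk : 1 ≤ (Multiset.card s : ℝ) := by
      have := Multiset.card_pos.2 hs
      exact_mod_cast this
    rw [Multiset.map_cons, Multiset.sum_cons, Multiset.sum_cons, Multiset.card_cons]
    push_cast
    have h1 : (0:ℝ) ≤ (s.map (fun x => x ^ 2)).sum :=
      Multiset.sum_nonneg (by intro x hx; obtain ⟨y, _, rfl⟩ := Multiset.mem_map.1 hx; positivity)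
    set k : ℝ := (Multiset.card s : ℝ)
    set Q : ℝ := (s.map (fun x => x ^ 2)).sum
    have key : 0 ≤ k * ((k+1)*(a^2+Q) - (a+s.sum)^2) := by
      nlinarith [sq_nonneg (k * a - s.sum), ih, h1, hk]
    nlinarith [key, hk]


open Polynomial Multiset

def Hyp (p : Polynomial ℝ) : Prop := Multiset.card p.roots = p.natDegree

lemma natDeg_deriv {p : Polynomial ℝ} (hp : p.natDegree ≠ 0) :
    (derivative p).natDegree = p.natDegree - 1 := by
  refine le_antisymm (natDegree_derivative_le p) ?_
  apply le_natDegree_of_ne_zero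
  rw [coeff_derivative]
  have h1 : p.natDegree - 1 + 1 = p.natDegree := by omega
  rw [h1]
  have hp0 : p ≠ 0 := fun h0 => hp (by simp [h0])
  have : p.coeff p.natDegree ≠ 0 := by
    rw [coeff_natDegree]; exact leadingCoeff_ne_zero.2 hp0
  apply mul_ne_zero this
  positivity

lemma hyp_deriv {p : Polynomial ℝ} (hp : Hyp p) : Hyp (derivative p) := by
  rcases eq_or_ne p.natDegree 0 with h0 | h0
  · rw [Hyp, derivative_of_natDegree_zero h0]; simp
  · have h1 := card_roots' (derivative p)
    have h2 := card_roots_le_derivative p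
    rw [Hyp] at hp ⊢
    rw [natDeg_deriv h0] at h1 ⊢
    omega

lemma mult_deriv_of_not_root {p : Polynomial ℝ} (hp : Hyp p) {x : ℝ} (hx : ¬ p.IsRoot x) :
    rootMultiplicity x (derivative p) ≤ 1 := by
  by_contra hcon
  push_neg at hcon
  set q := derivative p with hq
  have hq0 : q ≠ 0 := by
    intro h0; rw [h0, rootMultiplicity_zero] at hcon; omega
  have hp0 : p ≠ 0 := by
    intro h0; apply hq0; rw [hq, h0, derivative_zero]
  have hn0 : p.natDegree ≠ 0 := fun h0 => hq0 (derivative_of_natDegree_zero h0)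
  set n := p.natDegree with hn
  set A := p.roots.toFinset with hA
  set T := q.roots.toFinset with hT
  set B := T \ A with hB
  have hxT : x ∈ T := by
    rw [hT, Multiset.mem_toFinset, mem_roots hq0]
    exact (rootMultiplicity_pos hq0).1 (by omega)
  have hxA : x ∉ A := by
    rw [hA, Multiset.mem_toFinset, mem_roots hp0]; exact hx
  have hxB : x ∈ B := Finset.mem_sdiff.2 ⟨hxT, hxA⟩
  -- sum over A
  have hcnt : ∀ z ∈ A, q.roots.count z = p.roots.count z - 1 := by
    intro z hz
    rw [count_roots, count_roots, hq, derivative_rootMultiplicity_of_root]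
    rw [hA, Multiset.mem_toFinset, mem_roots hp0] at hz; exact hz
  have hsumA : ∑ z ∈ A, q.roots.count z = n - A.card := by
    rw [Finset.sum_congr rfl hcnt, Finset.sum_tsub_distrib]
    · rw [Multiset.toFinset_sum_count_eq, hp, Finset.sum_const, smul_eq_mul, mul_one]
    · intro z hz
      rw [hA, Multiset.mem_toFinset] at hz
      exact Multiset.one_le_count_iff_mem.2 hz
  -- sum over B
  have hsumB : B.card + 1 ≤ ∑ z ∈ B, q.roots.count z := by
    rw [← Finset.add_sum_erase _ _ hxB]
    have h1 : 2 ≤ q.roots.count x := by rw [count_roots]; exact hcon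
    have h2 : (B.erase x).card ≤ ∑ z ∈ B.erase x, q.roots.count z := by
      have := Finset.card_nsmul_le_sum (B.erase x) (fun z => q.roots.count z) 1 ?_
      · simpa using this
      intro z hz
      have : z ∈ T := Finset.mem_sdiff.1 (Finset.mem_of_mem_erase hz) |>.1
      rw [hT, Multiset.mem_toFinset] at this
      exact Multiset.one_le_count_iff_mem.2 this
    have h3 : (B.erase x).card = B.card - 1 := Finset.card_erase_of_mem hxB
    have h4 : 1 ≤ B.card := Finset.card_pos.2 ⟨x, hxB⟩
    omega
  have hAB : A.card ≤ B.card + 1 := card_roots_toFinset_le_card_roots_derivative_diff_roots_succ p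
  -- total
  have hdisj : Disjoint A B := (Finset.sdiff_disjoint).symm
  have htot : ∑ z ∈ A ∪ B, q.roots.count z ≤ Multiset.card q.roots := by
    calc ∑ z ∈ A ∪ B, q.roots.count z ≤ ∑ z ∈ (A ∪ B) ∪ T, q.roots.count z :=
          Finset.sum_le_sum_of_subset Finset.subset_union_left
      _ = ∑ z ∈ T, q.roots.count z := by
          refine (Finset.sum_subset Finset.subset_union_right ?_).symm
          intro z _ hz
          rw [hT, Multiset.mem_toFinset] at hz
          exact Multiset.count_eq_zero.2 hz
      _ = Multiset.card q.roots := Multiset.toFinset_sum_count_eq _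
  rw [Finset.sum_union hdisj, hsumA] at htot
  have hdeg : Multiset.card q.roots ≤ n - 1 := by
    have := card_roots' q
    rw [hq, natDeg_deriv hn0] at this
    exact this
  have hAn : A.card ≤ n := by
    have := Multiset.toFinset_card_le p.roots
    omega
  omega


open Polynomial Multiset

lemma hyp_iter {p : Polynomial ℝ} (hp : Hyp p) (k : ℕ) : Hyp (derivative^[k] p) := by
  induction k with
  | zero => exact hp
  | succ k ih => rw [Function.iterate_succ_apply']; exact hyp_deriv ih

lemma natDeg_iter {p : Polynomial ℝ} {k : ℕ} (hk : k ≤ p.natDegree) :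
    (derivative^[k] p).natDegree = p.natDegree - k := by
  induction k with
  | zero => simp
  | succ k ih =>
    have hk' : k ≤ p.natDegree := by omega
    rw [Function.iterate_succ_apply', natDeg_deriv (by rw [ih hk']; omega), ih hk']
    omega

lemma iter_ne_zero {p : Polynomial ℝ} {k : ℕ} (hk : k ≤ p.natDegree) (hp : p ≠ 0) :
    derivative^[k] p ≠ 0 := by
  induction k with
  | zero => simpa
  | succ k ih =>
    have hk' : k ≤ p.natDegree := by omega
    rw [Function.iterate_succ_apply']
    intro h0
    have := natDegree_eq_zero_of_derivative_eq_zero h0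
    rw [natDeg_iter hk'] at this
    omega

lemma mult_iter_eq {f : Polynomial ℝ} (hf : Hyp f) (j : ℕ) (x : ℝ)
    (h2 : 2 ≤ rootMultiplicity x (derivative^[j] f)) :
    rootMultiplicity x (derivative^[j] f) + j = rootMultiplicity x f := by
  induction j with
  | zero => simp
  | succ j ih =>
    rw [Function.iterate_succ_apply'] at h2 ⊢
    set p := derivative^[j] f with hp
    have hypp : Hyp p := hyp_iter hf j
    have hroot : p.IsRoot x := by
      by_contra hx
      have := mult_deriv_of_not_root hypp hx
      omega
    have hp0 : p ≠ 0 := by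
      intro h0
      rw [h0, derivative_zero, rootMultiplicity_zero] at h2
      omega
    have hm := derivative_rootMultiplicity_of_root hroot
    have hpos : 1 ≤ rootMultiplicity x p := (rootMultiplicity_pos hp0).2 hroot
    have h2' : 2 ≤ rootMultiplicity x p := by omega
    have := ih h2'
    omega

lemma mult_iter_one {f : Polynomial ℝ} (hf : Hyp f) {j : ℕ} {x : ℝ}
    (hj : rootMultiplicity x f ≤ j + 1)
    (hroot : (derivative^[j] f).IsRoot x) (hne : derivative^[j] f ≠ 0) :
    rootMultiplicity x (derivative^[j] f) = 1 := by
  have h1 : 1 ≤ rootMultiplicity x (derivative^[j] f) := (rootMultiplicity_pos hne).2 hroot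
  by_contra h
  have h2 : 2 ≤ rootMultiplicity x (derivative^[j] f) := by omega
  have := mult_iter_eq hf j x h2
  omega


open Polynomial Multiset

set_option maxHeartbeats 1000000 in
lemma p2_step {q : Polynomial ℝ} (hq : Hyp q) :
    (((derivative q).roots).map (fun x => x ^ 2)).sum ≤ ((q.roots).map (fun x => x ^ 2)).sum := by
  have hQ0 : 0 ≤ ((q.roots).map (fun x => x ^ 2)).sum :=
    Multiset.sum_nonneg (by intro x hx; obtain ⟨y, _, rfl⟩ := Multiset.mem_map.1 hx; positivity)
  rcases le_or_gt q.natDegree 1 with hd | hd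
  · have h1 := card_roots' (derivative q)
    have h2 := natDegree_derivative_le q
    have h3 : Multiset.card (derivative q).roots = 0 := by omega
    rw [Multiset.card_eq_zero] at h3
    rw [h3]
    simpa using hQ0
  -- d ≥ 2
  set d := q.natDegree with hdd
  have hq0 : q ≠ 0 := by intro h0; rw [hdd, h0] at hd; simp at hd
  have hL : q.leadingCoeff ≠ 0 := leadingCoeff_ne_zero.2 hq0
  set L : ℝ := q.leadingCoeff with hLdef
  have hhyp' : Hyp (derivative q) := hyp_deriv hq
  have hnd' : (derivative q).natDegree = d - 1 := natDeg_deriv (by omega)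
  set R := q.roots with hR
  set S := (derivative q).roots with hS
  have hcardR : Multiset.card R = d := hq
  have hcardS : Multiset.card S = d - 1 := by rw [hS, hhyp', hnd']
  set σ : ℝ := R.sum with hσ
  set sS : ℝ := S.sum with hsS
  set e2 : ℝ := R.esymm 2 with he2
  -- Vieta for q at k = d-1 and k = d-2
  have hv1 : q.coeff (d - 1) = L * (-1) ^ 1 * R.esymm 1 := by
    have h := coeff_eq_esymm_roots_of_card hq (show d - 1 ≤ d by omega)
    rwa [show d - (d - 1) = 1 by omega] at h
  have hv2 : q.coeff (d - 2) = L * (-1) ^ 2 * e2 := by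
    have h := coeff_eq_esymm_roots_of_card hq (show d - 2 ≤ d by omega)
    rwa [show d - (d - 2) = 2 by omega] at h
  have hA1 : q.coeff (d - 1) = -(L * σ) := by rw [hv1, my_esymm_one]; ring
  have hA2 : q.coeff (d - 2) = L * e2 := by rw [hv2]; ring
  -- leading coeff of derivative
  have hC0 : (derivative q).leadingCoeff = (d : ℝ) * L := by
    rw [leadingCoeff, hnd']
    have h := coeff_derivative q (d - 1)
    rw [show d - 1 + 1 = d by omega] at h
    rw [h, coeff_natDegree]
    have : ((d - 1 : ℕ) : ℝ) + 1 = (d : ℝ) := by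
      push_cast [Nat.cast_sub (show 1 ≤ d by omega)]; ring
    rw [this, ← hLdef]; ring
  -- Vieta for derivative at k = d-2
  have hv1' : (derivative q).coeff (d - 2) = (d : ℝ) * L * (-1) ^ 1 * S.esymm 1 := by
    have h := coeff_eq_esymm_roots_of_card (p := derivative q) (by rw [← hS, hcardS, hnd'])
        (k := d - 2) (by rw [hnd']; omega)
    rwa [hnd', show d - 1 - (d - 2) = 1 by omega, hC0] at h
  have hB1 : (derivative q).coeff (d - 2) = -((d : ℝ) * L * sS) := by
    rw [hv1', my_esymm_one]; ring
  have hC1 : (derivative q).coeff (d - 2) = -(L * σ) * ((d : ℝ) - 1) := by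
    have h := coeff_derivative q (d - 2)
    rw [show d - 2 + 1 = d - 1 by omega] at h
    rw [h, hA1]
    have : ((d - 2 : ℕ) : ℝ) + 1 = (d : ℝ) - 1 := by
      push_cast [Nat.cast_sub (show 2 ≤ d by omega)]; ring
    rw [this]
  have eq1 : (d : ℝ) * sS = ((d : ℝ) - 1) * σ := by
    have h : L * ((d : ℝ) * sS) = L * (((d : ℝ) - 1) * σ) := by
      have := hB1.symm.trans hC1
      linarith [this]
    exact mul_left_cancel₀ hL h
  have hCS : σ ^ 2 ≤ (d : ℝ) * ((R.map (fun x => x ^ 2)).sum) := by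
    have := my_cs R
    rwa [hcardR] at this
  have hp2R : (R.map (fun x => x ^ 2)).sum = σ ^ 2 - 2 * e2 := my_sq_sum R
  rcases eq_or_lt_of_le (show 2 ≤ d by omega) with hd2 | hd3
  · -- d = 2 : S is a singleton
    have hc1 : Multiset.card S = 1 := by omega
    obtain ⟨y, hy⟩ := Multiset.card_eq_one.1 hc1
    have hsy : sS = y := by rw [hsS, hy, Multiset.sum_singleton]
    have hmap : (Multiset.map (fun x => x ^ 2) S).sum = y ^ 2 := by
      rw [hy, Multiset.map_singleton, Multiset.sum_singleton]
    have hd2' : (d : ℝ) = 2 := by exact_mod_cast congrArg (Nat.cast : ℕ → ℝ) hd2.symm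
    have eq1' : 2 * y = σ := by
      rw [hd2', hsy] at eq1; linarith
    have hσ2 : σ ^ 2 = 4 * y ^ 2 := by linear_combination (-(σ + 2*y)) * eq1'
    rw [hmap, hp2R]
    rw [hp2R] at hCS hQ0
    rw [hd2'] at hCS
    linarith
  -- d ≥ 3
  set E2 : ℝ := S.esymm 2 with hE2
  have hv2' : (derivative q).coeff (d - 3) = (d : ℝ) * L * (-1) ^ 2 * E2 := by
    have h := coeff_eq_esymm_roots_of_card (p := derivative q) (by rw [← hS, hcardS, hnd'])
        (k := d - 3) (by rw [hnd']; omega)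
    rwa [hnd', show d - 1 - (d - 3) = 2 by omega, hC0] at h
  have hB2 : (derivative q).coeff (d - 3) = (d : ℝ) * L * E2 := by rw [hv2']; ring
  have hC2 : (derivative q).coeff (d - 3) = L * e2 * ((d : ℝ) - 2) := by
    have h := coeff_derivative q (d - 3)
    rw [show d - 3 + 1 = d - 2 by omega] at h
    rw [h, hA2]
    have : ((d - 3 : ℕ) : ℝ) + 1 = (d : ℝ) - 2 := by
      push_cast [Nat.cast_sub (show 3 ≤ d by omega)]; ring
    rw [this]
  have eq2 : (d : ℝ) * E2 = ((d : ℝ) - 2) * e2 := by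
    have h : L * ((d : ℝ) * E2) = L * (((d : ℝ) - 2) * e2) := by
      have := hB2.symm.trans hC2
      linarith [this]
    exact mul_left_cancel₀ hL h
  have hp2S : (S.map (fun x => x ^ 2)).sum = sS ^ 2 - 2 * E2 := my_sq_sum S
  have hdR : (3 : ℝ) ≤ (d : ℝ) := by exact_mod_cast hd3
  rw [hp2R, hp2S]
  rw [hp2R] at hCS hQ0
  have key : (d : ℝ) ^ 2 * ((σ ^ 2 - 2 * e2) - (sS ^ 2 - 2 * E2)) =
      (2 * (d : ℝ) - 1) * σ ^ 2 - 4 * (d : ℝ) * e2 := by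
    linear_combination (-((d : ℝ) * sS + ((d : ℝ) - 1) * σ)) * eq1 + 2 * (d : ℝ) * eq2
  have h1 : 0 ≤ (2 * (d : ℝ) - 1) * σ ^ 2 - 4 * (d : ℝ) * e2 := by
    nlinarith [hCS, hQ0, hdR, sq_nonneg σ]
  have h2 : 0 ≤ (d : ℝ) ^ 2 * ((σ ^ 2 - 2 * e2) - (sS ^ 2 - 2 * E2)) := by
    rw [key]; exact h1
  have hd2pos : 0 < (d : ℝ) ^ 2 := by positivity
  nlinarith [h2, hd2pos]


open Polynomial Multiset

lemma p2_iter {q : Polynomial ℝ} (hq : Hyp q) (k : ℕ) :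
    (((derivative^[k] q).roots).map (fun x => x ^ 2)).sum ≤ ((q.roots).map (fun x => x ^ 2)).sum := by
  induction k with
  | zero => simp
  | succ k ih =>
    rw [Function.iterate_succ_apply']
    exact le_trans (p2_step (hyp_iter hq k)) ih

lemma hyp_of_real {f : Polynomial ℝ} (hf : f.Monic)
    (hreal : ∀ z : ℂ, Polynomial.aeval z f = 0 → z.im = 0) : Hyp f := by
  classical
  set F := f.map (algebraMap ℝ ℂ) with hF
  have hinj : Function.Injective (algebraMap ℝ ℂ) := (algebraMap ℝ ℂ).injective
  have hF0 : F ≠ 0 := (Polynomial.map_ne_zero_iff hinj).2 hf.ne_zero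
  have hFdeg : F.natDegree = f.natDegree := hf.natDegree_map (algebraMap ℝ ℂ)
  have hFroots : Multiset.card F.roots = F.natDegree :=
    splits_iff_card_roots.1 (IsAlgClosed.splits F)
  have hzero : ∀ z : ℂ, z ∈ F.roots → z.im = 0 := by
    intro z hz
    apply hreal
    rw [aeval_def, eval₂_eq_eval_map]
    exact (mem_roots hF0).1 hz
  have key : F.roots = f.roots.map (fun x : ℝ => algebraMap ℝ ℂ x) := by
    ext z
    by_cases hex : ∃ x : ℝ, z = algebraMap ℝ ℂ x
    · obtain ⟨x, rfl⟩ := hex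
      rw [Multiset.count_map_eq_count' _ _ hinj, count_roots, count_roots,
        ← eq_rootMultiplicity_map hinj]
    · rw [Multiset.count_eq_zero.2, Multiset.count_eq_zero.2]
      · intro hz
        obtain ⟨x, _, hx⟩ := Multiset.mem_map.1 hz
        exact hex ⟨x, hx.symm⟩
      · intro hz
        have him := hzero z hz
        refine hex ⟨z.re, ?_⟩
        apply Complex.ext <;> simp [him]
  have := congrArg Multiset.card key
  rw [Multiset.card_map] at this
  rw [Hyp, ← this, hFroots, hFdeg]

theorem stmt10 (n r m s : ℕ) (f : Polynomial ℝ) (hf : f.Monic) (hdeg : f.natDegree = n)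
    (hreal : ∀ z : ℂ, Polynomial.aeval z f = 0 → z.im = 0)
    (hCA : ∀ j : ℕ, 1 ≤ j → j ≤ n - 1 →
      ∃ z : ℝ, f.eval z = 0 ∧ (Polynomial.derivative^[j] f).eval z = 0)
    (hnt : ¬ ∃ b : ℝ, f = (Polynomial.X - Polynomial.C b) ^ n)
    (hr1 : ∀ x : ℝ, Polynomial.rootMultiplicity x f ≤ r)
    (hr2 : ∃ x : ℝ, f.eval x = 0 ∧ Polynomial.rootMultiplicity x f = r)
    (hm : r - 1 ≤ m) (hs2 : 2 ≤ s) (hsn : s ≤ n - r) (hms : m + s ≤ n - 1) :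
    ((((Polynomial.derivative^[m + s] f).roots).filter
        (fun x => ¬ (f.eval x = 0 ∧ (Polynomial.derivative^[m] f).eval x = 0 ∧
          (Polynomial.derivative^[m + s] f).eval x = 0))).map (fun x => x ^ 2)).sum ≤
      ((((Polynomial.derivative^[m] f).roots).filter
        (fun x => ¬ (f.eval x = 0 ∧ (Polynomial.derivative^[m] f).eval x = 0 ∧
          (Polynomial.derivative^[m + s] f).eval x = 0))).map (fun x => x ^ 2)).sum := by
  have hypf : Hyp f := hyp_of_real hf hreal
  have hf0 : f ≠ 0 := hf.ne_zero
  have hn3 : 3 ≤ n := by omega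
  set g := derivative^[m] f with hg
  set h := derivative^[m + s] f with hh
  have hmn : m ≤ f.natDegree := by omega
  have hmsn : m + s ≤ f.natDegree := by omega
  have hgne : g ≠ 0 := iter_ne_zero hmn hf0
  have hhne : h ≠ 0 := iter_ne_zero hmsn hf0
  have hypg : Hyp g := hyp_iter hypf m
  have hyph : Hyp h := hyp_iter hypf (m + s)
  set P : ℝ → Prop := fun x => f.eval x = 0 ∧ g.eval x = 0 ∧ h.eval x = 0 with hP
  have hcg : ∀ x, P x → g.roots.count x = 1 := by
    intro x hx
    rw [count_roots]
    exact mult_iter_one hypf (le_trans (hr1 x) (by omega)) hx.2.1 hgne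
  have hch : ∀ x, P x → h.roots.count x = 1 := by
    intro x hx
    rw [count_roots]
    exact mult_iter_one hypf (le_trans (hr1 x) (by omega)) hx.2.2 hhne
  classical
  have hfilt : g.roots.filter P = h.roots.filter P := by
    ext x
    rw [Multiset.count_filter, Multiset.count_filter]
    by_cases hx : P x
    · rw [if_pos hx, if_pos hx, hcg x hx, hch x hx]
    · rw [if_neg hx, if_neg hx]
  have hsplit_g : g.roots.filter P + g.roots.filter (fun x => ¬ P x) = g.roots :=
    Multiset.filter_add_not P g.roots
  have hsplit_h : h.roots.filter P + h.roots.filter (fun x => ¬ P x) = h.roots :=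
    Multiset.filter_add_not P h.roots
  have hp2 : ((h.roots).map (fun x => x ^ 2)).sum ≤ ((g.roots).map (fun x => x ^ 2)).sum := by
    have hrw : h = derivative^[s] g := by
      rw [hg, hh, ← Function.iterate_add_apply, Nat.add_comm]
    rw [hrw]
    exact p2_iter hypg s
  have eg := congrArg (fun t : Multiset ℝ => ((t.map (fun x => x ^ 2)).sum : ℝ)) hsplit_g
  have eh := congrArg (fun t : Multiset ℝ => ((t.map (fun x => x ^ 2)).sum : ℝ)) hsplit_h
  simp only [Multiset.map_add, Multiset.sum_add] at eg eh
  have hsame : ((g.roots.filter P).map (fun x => x ^ 2)).sum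
      = ((h.roots.filter P).map (fun x => x ^ 2)).sum := by rw [hfilt]
  show ((h.roots.filter (fun x => ¬ P x)).map (fun x => x ^ 2)).sum ≤
      ((g.roots.filter (fun x => ¬ P x)).map (fun x => x ^ 2)).sum
  linarith [eg, eh, hp2, hsame]
end

section
/- Let f be a monic complex polynomial of degree n ≥ 2 having n simple roots w_1, ..., w_n (i.e. f is squarefree), let 0 ≤ m ≤ n, let ξ_1^{(m)}, ..., ξ_{n-m}^{(m)} be the roots of f^{(m)} counted with multiplicity, let z_{n-1} be the unique root of f^{(n-1)}, and let z_{n-2} be any root of the quadratic polynomial f^{(n-2)}. Then Σ_{j=1}^{n-m} (ξ_j^{(m)})^2 = Σ_{j=1}^{n} w_j^2 - m(2n - m - 1)(z_{n-1} - z_{n-2})^2 - m·z_{n-1}^2. -/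
open Polynomial


lemma esymm_one' (s : Multiset ℂ) : s.esymm 1 = s.sum := by
  simp [Multiset.esymm, Multiset.powersetCard_one, Multiset.map_map]

lemma esymm_two_cons (a : ℂ) (s : Multiset ℂ) :
    (a ::ₘ s).esymm 2 = s.esymm 2 + a * s.sum := by
  rw [Multiset.esymm, Multiset.powersetCard_cons, Multiset.map_add, Multiset.sum_add]
  congr 1
  rw [Multiset.map_map]
  simp only [Function.comp_def, Multiset.prod_cons, Multiset.powersetCard_one,
    Multiset.map_map, Multiset.prod_singleton]
  induction s using Multiset.induction with
  | empty => simp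
  | cons b s ih => simp [ih, mul_add]

lemma sum_sq_eq (s : Multiset ℂ) :
    (s.map (fun x => x ^ 2)).sum = s.sum ^ 2 - 2 * s.esymm 2 := by
  induction s using Multiset.induction with
  | empty => simp [Multiset.esymm, Multiset.powersetCard_zero_right 1]
  | cons a s ih =>
      rw [Multiset.map_cons, Multiset.sum_cons, Multiset.sum_cons, esymm_two_cons, ih]
      ring

lemma descFac_ne (n m : ℕ) (hm : m ≤ n) : ((n.descFactorial m : ℕ) : ℂ) ≠ 0 := by
  exact_mod_cast fun h => absurd (Nat.descFactorial_eq_zero_iff_lt.mp (by exact_mod_cast h)) (by omega)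

lemma R1nat (n m : ℕ) (hn : 1 ≤ n) :
    n * (n - 1).descFactorial m = (n - m) * n.descFactorial m := by
  have h := Nat.succ_descFactorial_succ (n - 1) m
  rw [show n - 1 + 1 = n by omega] at h
  rw [← h, Nat.descFactorial_succ]

lemma R2nat (n m : ℕ) (hn : 2 ≤ n) :
    (n * (n - 1)) * (n - 2).descFactorial m = ((n - m) * (n - m - 1)) * n.descFactorial m := by
  have h1 := Nat.succ_descFactorial_succ (n - 1) (m + 1)
  rw [show n - 1 + 1 = n by omega] at h1
  have h2 := Nat.succ_descFactorial_succ (n - 2) m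
  rw [show n - 2 + 1 = n - 1 by omega] at h2
  have h3 := Nat.descFactorial_succ n (m + 1)
  have h4 := Nat.descFactorial_succ n m
  have hs : n - (m + 1) = n - m - 1 := by omega
  rw [h2] at h1
  rw [h1, hs, h4] at h3
  -- h3 : n * ((n-1) * (n-2).descFactorial m) = (n - m - 1) * ((n - m) * n.descFactorial m)
  calc (n * (n - 1)) * (n - 2).descFactorial m
      = n * ((n - 1) * (n - 2).descFactorial m) := by ring
    _ = (n - m - 1) * ((n - m) * n.descFactorial m) := h3
    _ = ((n - m) * (n - m - 1)) * n.descFactorial m := by ring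

lemma iter_deg (n m : ℕ) (f : Polynomial ℂ) (hf : f.Monic) (hdeg : f.natDegree = n)
    (hm : m ≤ n) :
    (Polynomial.derivative^[m] f).natDegree = n - m ∧
      (Polynomial.derivative^[m] f).coeff (n - m) = (n.descFactorial m : ℂ) := by
  have hc : (Polynomial.derivative^[m] f).coeff (n - m) = (n.descFactorial m : ℂ) := by
    rw [Polynomial.coeff_iterate_derivative, Nat.sub_add_cancel hm, ← hdeg,
      hf.coeff_natDegree, nsmul_eq_mul, mul_one]
  refine ⟨le_antisymm ?_ (le_natDegree_of_ne_zero ?_), hc⟩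
  · simpa [hdeg] using Polynomial.natDegree_iterate_derivative f m
  · rw [hc]; exact descFac_ne n m hm

/-- Sum of squares of roots of the m-th derivative, for m + 2 ≤ n. -/
lemma aux_sumsq (n m : ℕ) (f : Polynomial ℂ) (hf : f.Monic) (hdeg : f.natDegree = n)
    (h2 : m + 2 ≤ n) :
    (((Polynomial.derivative^[m] f).roots).map (fun x => x ^ 2)).sum =
      (f.coeff (n - 1)) ^ 2 * ((n : ℂ) - m) ^ 2 / (n : ℂ) ^ 2
        - 2 * f.coeff (n - 2) * ((n : ℂ) - m) * ((n : ℂ) - m - 1) / ((n : ℂ) * ((n : ℂ) - 1)) := by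
  have hm : m ≤ n := by omega
  obtain ⟨hgd, hgc⟩ := iter_deg n m f hf hdeg hm
  set g := Polynomial.derivative^[m] f with hg
  set D : ℂ := ((n.descFactorial m : ℕ) : ℂ) with hD
  have hDne : D ≠ 0 := descFac_ne n m hm
  have hgne : g ≠ 0 := fun h => hDne (by rw [← hgc, h, coeff_zero])
  have hlead : g.leadingCoeff = D := by rw [leadingCoeff, hgd, hgc]
  have hcard : Multiset.card g.roots = g.natDegree :=
    splits_iff_card_roots.mp (IsAlgClosed.splits g)
  have hNne : (n : ℂ) ≠ 0 := by exact_mod_cast (by omega : n ≠ 0)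
  have hN1ne : (n : ℂ) - 1 ≠ 0 := by
    intro h
    have : (n : ℂ) = 1 := by linear_combination h
    exact absurd (by exact_mod_cast this : n = 1) (by omega)
  -- Vieta for coefficient n - m - 1
  have h1 := Polynomial.coeff_eq_esymm_roots_of_card hcard
    (k := n - m - 1) (by rw [hgd]; omega)
  rw [hgd, show n - m - (n - m - 1) = 1 by omega, hlead, pow_one, esymm_one'] at h1
  have h1' : g.coeff (n - m - 1) = ((n - 1).descFactorial m : ℕ) * f.coeff (n - 1) := by
    rw [hg, Polynomial.coeff_iterate_derivative, show n - m - 1 + m = n - 1 by omega,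
      nsmul_eq_mul]
  -- Vieta for coefficient n - m - 2
  have h2' := Polynomial.coeff_eq_esymm_roots_of_card hcard
    (k := n - m - 2) (by rw [hgd]; omega)
  rw [hgd, show n - m - (n - m - 2) = 2 by omega, hlead] at h2'
  have h2'' : g.coeff (n - m - 2) = ((n - 2).descFactorial m : ℕ) * f.coeff (n - 2) := by
    rw [hg, Polynomial.coeff_iterate_derivative, show n - m - 2 + m = n - 2 by omega,
      nsmul_eq_mul]
  -- ratio identities
  have hcastm : ((n - m : ℕ) : ℂ) = (n : ℂ) - m := Nat.cast_sub hm
  have hcastm1 : ((n - m - 1 : ℕ) : ℂ) = (n : ℂ) - m - 1 := by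
    rw [Nat.cast_sub (by omega : 1 ≤ n - m), hcastm]; norm_num
  have hr1 : (n : ℂ) * ((n - 1).descFactorial m : ℕ) = ((n : ℂ) - m) * D := by
    have := R1nat n m (by omega)
    rw [← hcastm, hD]
    exact_mod_cast this
  have hr2 : ((n : ℂ) * ((n : ℂ) - 1)) * ((n - 2).descFactorial m : ℕ)
      = (((n : ℂ) - m) * ((n : ℂ) - m - 1)) * D := by
    have := R2nat n m (by omega)
    rw [← hcastm1, ← hcastm, hD, show ((n : ℂ) - 1) = ((n - 1 : ℕ) : ℂ) from
      (by rw [Nat.cast_sub (by omega : 1 ≤ n)]; norm_num)]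
    exact_mod_cast this
  -- solve for sum and esymm 2
  have hA := h1.symm.trans h1'
  have key : D * (g.roots.sum * (n : ℂ)) = D * (-(((n : ℂ) - m) * f.coeff (n - 1))) := by
    linear_combination (-(n : ℂ)) * hA - f.coeff (n - 1) * hr1
  have hsum' := mul_left_cancel₀ hDne key
  have hsum : g.roots.sum = -(((n : ℂ) - m) / (n : ℂ) * f.coeff (n - 1)) := by
    field_simp
    linear_combination hsum'
  have hB := h2'.symm.trans h2''
  have key2 : D * (g.roots.esymm 2 * ((n : ℂ) * ((n : ℂ) - 1)))
      = D * (((n : ℂ) - m) * ((n : ℂ) - m - 1) * f.coeff (n - 2)) := by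
    linear_combination ((n : ℂ) * ((n : ℂ) - 1)) * hB + f.coeff (n - 2) * hr2
  have he2' := mul_left_cancel₀ hDne key2
  have hesymm : g.roots.esymm 2
      = ((n : ℂ) - m) * ((n : ℂ) - m - 1) / ((n : ℂ) * ((n : ℂ) - 1)) * f.coeff (n - 2) := by
    rw [eq_comm, div_mul_eq_mul_div, div_eq_iff (mul_ne_zero hNne hN1ne)]
    linear_combination -he2'
  rw [sum_sq_eq, hsum, hesymm]
  field_simp


theorem stmt18 (n m : ℕ) (hn : 2 ≤ n) (f : Polynomial ℂ) (hf : f.Monic)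
    (hdeg : f.natDegree = n) (hsf : Squarefree f) (hm : m ≤ n) (z₁ z₂ : ℂ)
    (hz₁ : (Polynomial.derivative^[n - 1] f).eval z₁ = 0)
    (hz₂ : (Polynomial.derivative^[n - 2] f).eval z₂ = 0) :
    (((Polynomial.derivative^[m] f).roots).map (fun x => x ^ 2)).sum =
      ((f.roots).map (fun x => x ^ 2)).sum
        - (m : ℂ) * (2 * (n : ℂ) - (m : ℂ) - 1) * (z₁ - z₂) ^ 2
        - (m : ℂ) * z₁ ^ 2 := by
  have hNne : (n : ℂ) ≠ 0 := by exact_mod_cast (by omega : n ≠ 0)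
  have hN1ne : (n : ℂ) - 1 ≠ 0 := by
    intro h
    have : (n : ℂ) = 1 := by linear_combination h
    exact absurd (by exact_mod_cast this : n = 1) (by omega)
  -- factorial facts
  have hcastn1 : ((n - 1 : ℕ) : ℂ) = (n : ℂ) - 1 := by
    rw [Nat.cast_sub (by omega : 1 ≤ n)]; norm_num
  have hf3 : (n.descFactorial (n - 1) : ℂ) = (n : ℂ) * ((Nat.factorial (n - 1)) : ℂ) := by
    have h := R1nat n (n - 1) (by omega)
    rw [show n - (n - 1) = 1 by omega, one_mul, Nat.descFactorial_self] at h
    exact_mod_cast h.symm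
  have hf1 : ((n - 1).descFactorial (n - 2) : ℂ) = ((n : ℂ) - 1) * ((Nat.factorial (n - 2)) : ℂ) := by
    have h := R1nat (n - 1) (n - 2) (by omega)
    rw [show n - 1 - 1 = n - 2 by omega, show n - 1 - (n - 2) = 1 by omega, one_mul,
      Nat.descFactorial_self] at h
    rw [← hcastn1]
    exact_mod_cast h.symm
  have hf2 : 2 * (n.descFactorial (n - 2) : ℂ) = (n : ℂ) * ((n : ℂ) - 1) * ((Nat.factorial (n - 2)) : ℂ) := by
    have h := R1nat n (n - 2) (by omega)
    rw [show n - (n - 2) = 2 by omega] at h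
    have : (n * ((n - 1).descFactorial (n - 2)) : ℂ) = 2 * (n.descFactorial (n - 2) : ℂ) := by
      exact_mod_cast h
    rw [hf1] at this
    linear_combination -this
  -- linear derivative: get a = -n z₁
  obtain ⟨hg1d, hg1c⟩ := iter_deg n (n - 1) f hf hdeg (by omega)
  rw [show n - (n - 1) = 1 by omega] at hg1d hg1c
  have hc0 : (Polynomial.derivative^[n - 1] f).coeff 0 = ((Nat.factorial (n - 1)) : ℂ) * f.coeff (n - 1) := by
    rw [Polynomial.coeff_iterate_derivative, zero_add, Nat.descFactorial_self, nsmul_eq_mul]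
  have he1 : ((Nat.factorial (n - 1)) : ℂ) * f.coeff (n - 1) + (n.descFactorial (n - 1) : ℂ) * z₁ = 0 := by
    have h := hz₁
    rw [Polynomial.eval_eq_sum_range' (n := 2) (by omega) z₁, Finset.sum_range_succ,
      Finset.sum_range_one, hc0, hg1c] at h
    linear_combination h
  have hFne1 : ((Nat.factorial (n - 1)) : ℂ) ≠ 0 := by exact_mod_cast Nat.factorial_ne_zero (n - 1)
  have ha : f.coeff (n - 1) = -(n : ℂ) * z₁ := by
    have key : ((Nat.factorial (n - 1)) : ℂ) * (f.coeff (n - 1) + (n : ℂ) * z₁) = ((Nat.factorial (n - 1)) : ℂ) * 0 := by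
      linear_combination he1 - z₁ * hf3
    have := mul_left_cancel₀ hFne1 key
    linear_combination this
  -- quadratic derivative: get b
  obtain ⟨hg2d, hg2c⟩ := iter_deg n (n - 2) f hf hdeg (by omega)
  rw [show n - (n - 2) = 2 by omega] at hg2d hg2c
  have hd0 : (Polynomial.derivative^[n - 2] f).coeff 0 = ((Nat.factorial (n - 2)) : ℂ) * f.coeff (n - 2) := by
    rw [Polynomial.coeff_iterate_derivative, zero_add, Nat.descFactorial_self, nsmul_eq_mul]
  have hd1 : (Polynomial.derivative^[n - 2] f).coeff 1
      = ((n - 1).descFactorial (n - 2) : ℂ) * f.coeff (n - 1) := by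
    rw [Polynomial.coeff_iterate_derivative, show 1 + (n - 2) = n - 1 by omega, nsmul_eq_mul]
  have he2' : ((Nat.factorial (n - 2)) : ℂ) * f.coeff (n - 2)
      + ((n - 1).descFactorial (n - 2) : ℂ) * f.coeff (n - 1) * z₂
      + (n.descFactorial (n - 2) : ℂ) * z₂ ^ 2 = 0 := by
    have h := hz₂
    rw [Polynomial.eval_eq_sum_range' (n := 3) (by omega) z₂, Finset.sum_range_succ,
      Finset.sum_range_succ, Finset.sum_range_one, hd0, hd1, hg2c] at h
    linear_combination h
  have hFne2 : ((Nat.factorial (n - 2)) : ℂ) ≠ 0 := by exact_mod_cast Nat.factorial_ne_zero (n - 2)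
  have hbval : f.coeff (n - 2) = (n : ℂ) * ((n : ℂ) - 1) * (2 * z₁ * z₂ - z₂ ^ 2) / 2 := by
    have key : ((Nat.factorial (n - 2)) : ℂ) * (2 * f.coeff (n - 2)
        + 2 * ((n : ℂ) - 1) * f.coeff (n - 1) * z₂ + (n : ℂ) * ((n : ℂ) - 1) * z₂ ^ 2)
        = ((Nat.factorial (n - 2)) : ℂ) * 0 := by
      linear_combination 2 * he2' - z₂ ^ 2 * hf2 - 2 * z₂ * f.coeff (n - 1) * hf1
    have h := mul_left_cancel₀ hFne2 key
    rw [ha] at h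
    rw [eq_div_iff (two_ne_zero)]
    linear_combination h
  -- sum of squares of roots of f itself
  have hS0 := aux_sumsq n 0 f hf hdeg (by omega)
  rw [Function.iterate_zero_apply] at hS0
  by_cases hm2 : m + 2 ≤ n
  · rw [aux_sumsq n m f hf hdeg hm2, hS0, ha, hbval]
    field_simp
    ring
  · have hcases : m = n - 1 ∨ m = n := by omega
    rcases hcases with h | h
    · -- m = n - 1 : the derivative is linear with root z₁
      subst h
      obtain ⟨hg1ne⟩ : Nonempty ((Polynomial.derivative^[n - 1] f) ≠ 0) := by
        refine ⟨fun hz => ?_⟩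
        have : (Polynomial.derivative^[n - 1] f).coeff 1 = 0 := by rw [hz, coeff_zero]
        rw [hg1c, hf3] at this
        exact (mul_ne_zero hNne hFne1) this
      have hcard : Multiset.card (Polynomial.derivative^[n - 1] f).roots = 1 := by
        rw [splits_iff_card_roots.mp (IsAlgClosed.splits _), hg1d]
      have hmem : z₁ ∈ (Polynomial.derivative^[n - 1] f).roots :=
        Polynomial.mem_roots'.mpr ⟨hg1ne, hz₁⟩
      obtain ⟨c, hc⟩ := Multiset.card_eq_one.mp hcard
      rw [hc] at hmem
      have hcz : c = z₁ := (Multiset.mem_singleton.mp hmem).symm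
      rw [hc, hcz, Multiset.map_singleton, Multiset.sum_singleton, hS0, ha, hbval, hcastn1]
      field_simp
      ring
    · -- m = n : the derivative is a nonzero constant
      rw [h]
      obtain ⟨hgnd, hgnc⟩ := iter_deg n n f hf hdeg le_rfl
      rw [Nat.sub_self] at hgnd
      rw [Polynomial.eq_C_of_natDegree_eq_zero hgnd, Polynomial.roots_C, Multiset.map_zero,
        Multiset.sum_zero, hS0, ha, hbval]
      field_simp
      ring
end
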